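/- Suppose M : ℕ → (0,∞) satisfies lim_{N→∞} N(ln ln N)²/(M(N)·ln N) = 0, and let L3(β) = 2M(N)·∑_{n=1}^{N} γ_{θ_n}(β), where θ_n = π(2n−1)/(2N) and γ_θ(β) is the unique γ ≥ 0 with cosh(γ) = coth(2β)cosh(2β) − cos θ. Then for each fixed t ≥ 0, lim_{N→∞} [ L3(β_c − t/√(4M(N)N ln N)) − L3(β_c) ] = 4t²/π, where β_c = ln(1+√2)/2. -/

import Mathlib

open Filter Finset Real Topology

/-- The hyperbolic cotangent. -/
noncomputable def coth (x : ℝ) : ℝ := Real.cosh x / Real.sinh x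
/-- The critical inverse temperature of the two-dimensional Ising model. -/
noncomputable def betac : ℝ := Real.log (1 + Real.sqrt 2) / 2

lemma two_betac : 2 * betac = Real.log (1 + Real.sqrt 2) := by
  unfold betac; ring

lemma sqrt2_pos : (0:ℝ) < Real.sqrt 2 := Real.sqrt_pos.2 (by norm_num)

lemma betac_pos : 0 < betac := by
  have h : (1:ℝ) < 1 + Real.sqrt 2 := by linarith [sqrt2_pos]
  have := Real.log_pos h
  unfold betac; linarith

lemma exp_two_betac : Real.exp (2 * betac) = 1 + Real.sqrt 2 := by
  rw [two_betac, Real.exp_log (by linarith [sqrt2_pos])]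

lemma exp_neg_two_betac : Real.exp (-(2 * betac)) = Real.sqrt 2 - 1 := by
  rw [Real.exp_neg, exp_two_betac]
  have h2 : Real.sqrt 2 ^ 2 = 2 := Real.sq_sqrt (by norm_num)
  have h : (1 + Real.sqrt 2) * (Real.sqrt 2 - 1) = 1 := by nlinarith
  field_simp
  nlinarith [sqrt2_pos]

lemma sinh_two_betac : Real.sinh (2 * betac) = 1 := by
  rw [Real.sinh_eq, exp_two_betac, exp_neg_two_betac]; ring

lemma cosh_two_betac : Real.cosh (2 * betac) = Real.sqrt 2 := by
  rw [Real.cosh_eq, exp_two_betac, exp_neg_two_betac]; ring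

lemma coth_cosh_betac : coth (2 * betac) * Real.cosh (2 * betac) = 2 := by
  unfold coth
  rw [sinh_two_betac, cosh_two_betac]
  rw [div_one]; exact Real.mul_self_sqrt (by norm_num)

lemma coth_formula {β : ℝ} (h : 0 < Real.sinh (2*β)) :
    coth (2*β) * Real.cosh (2*β) - 2 = (Real.sinh (2*β) - 1)^2 / Real.sinh (2*β) := by
  unfold coth
  have hc : Real.cosh (2*β)^2 = Real.sinh (2*β)^2 + 1 := Real.cosh_sq _
  field_simp
  nlinarith [hc]

lemma sinh_two_beta_sub (d : ℝ) :
    Real.sinh (2*(betac - d)) = Real.cosh (2*d) - Real.sqrt 2 * Real.sinh (2*d) := by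
  have h : 2*(betac - d) = 2*betac - 2*d := by ring
  rw [h, Real.sinh_sub, sinh_two_betac, cosh_two_betac]; ring

lemma one_le_sqrt2 : (1:ℝ) ≤ Real.sqrt 2 := by
  nlinarith [Real.sq_sqrt (by norm_num : (0:ℝ) ≤ 2), sqrt2_pos]

lemma u_lt_one {d : ℝ} (hd : 0 < d) :
    Real.cosh (2*d) - Real.sqrt 2 * Real.sinh (2*d) < 1 := by
  have h1 : 0 < Real.sinh d := Real.sinh_pos_iff.2 hd
  have h2 : Real.sinh d < Real.cosh d := by
    have := Real.cosh_sub_sinh d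
    nlinarith [Real.exp_pos (-d)]
  have hs2 : Real.sinh (2*d) = 2*Real.sinh d*Real.cosh d := Real.sinh_two_mul d
  have hc2 : Real.cosh (2*d) = Real.cosh d^2 + Real.sinh d^2 := Real.cosh_two_mul d
  have hcsq : Real.cosh d^2 = Real.sinh d^2 + 1 := Real.cosh_sq d
  nlinarith [one_le_sqrt2, mul_pos h1 (h1.trans h2)]

lemma gamma_diff_bounds {c e g1 g2 : ℝ} (hc : 1 < c) (he : 0 < e)
    (h2 : 0 ≤ g2) (h1 : 0 ≤ g1) (hc2 : Real.cosh g2 = c) (hc1 : Real.cosh g1 = c + e) :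
    e / Real.sqrt ((c+e)^2 - 1) ≤ g1 - g2 ∧ g1 - g2 ≤ e / Real.sqrt (c^2 - 1) := by
  have hg2pos : 0 < g2 := by
    rcases eq_or_lt_of_le h2 with h | h
    · exfalso; rw [← h] at hc2; rw [Real.cosh_zero] at hc2; linarith
    · exact h
  have hlt : g2 < g1 := by
    have hcl : Real.cosh g2 < Real.cosh g1 := by rw [hc1, hc2]; linarith
    have := Real.cosh_lt_cosh.1 hcl
    rwa [abs_of_nonneg h2, abs_of_nonneg h1] at this
  obtain ⟨ξ, hξ, hslope⟩ := exists_hasDerivAt_eq_slope Real.cosh Real.sinh hlt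
      Real.continuous_cosh.continuousOn (fun x _ => Real.hasDerivAt_cosh x)
  have hsl : Real.sinh ξ = e / (g1 - g2) := by rw [hslope, hc1, hc2]; ring_nf
  have hs2eq : Real.sinh g2 = Real.sqrt (c^2-1) := by
    have hq : Real.sinh g2 ^ 2 = c^2 - 1 := by
      have := Real.cosh_sq g2; rw [hc2] at this; linarith
    rw [← hq, Real.sqrt_sq (Real.sinh_nonneg_iff.2 h2)]
  have hs1eq : Real.sinh g1 = Real.sqrt ((c+e)^2-1) := by
    have hq : Real.sinh g1 ^ 2 = (c+e)^2 - 1 := by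
      have := Real.cosh_sq g1; rw [hc1] at this; linarith
    rw [← hq, Real.sqrt_sq (Real.sinh_nonneg_iff.2 h1)]
  have hd : 0 < g1 - g2 := by linarith
  have hsg2 : 0 < Real.sinh g2 := Real.sinh_pos_iff.2 hg2pos
  have hsξ1 : Real.sinh g2 < Real.sinh ξ := Real.sinh_lt_sinh.2 hξ.1
  have hsξ2 : Real.sinh ξ < Real.sinh g1 := Real.sinh_lt_sinh.2 hξ.2
  have hsξpos : 0 < Real.sinh ξ := lt_trans hsg2 hsξ1
  have hmain : g1 - g2 = e / Real.sinh ξ := by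
    rw [hsl]; field_simp
  constructor
  · rw [hmain, ← hs1eq]
    exact div_le_div_of_nonneg_left he.le hsξpos hsξ2.le
  · rw [hmain, ← hs2eq]
    exact div_le_div_of_nonneg_left he.le hsg2 hsξ1.le

lemma sin_half_pos {θ : ℝ} (h0 : 0 < θ) (hπ : θ ≤ Real.pi) : 0 < Real.sin (θ/2) :=
  Real.sin_pos_of_pos_of_lt_pi (by linarith) (by linarith [Real.pi_pos])

lemma cos_eq_sin_half (θ : ℝ) : Real.cos θ = 1 - 2 * Real.sin (θ/2)^2 := by
  have h : Real.cos (2*(θ/2)) = 2 * Real.cos (θ/2)^2 - 1 := Real.cos_two_mul (θ/2)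
  have h2 := Real.sin_sq_add_cos_sq (θ/2)
  have h3 : 2*(θ/2) = θ := by ring
  rw [h3] at h
  linarith

lemma jordan_half {θ : ℝ} (h0 : 0 ≤ θ) (hπ : θ ≤ Real.pi) : θ/Real.pi ≤ Real.sin (θ/2) := by
  have h := Real.mul_le_sin (x := θ/2) (by linarith) (by linarith)
  have hπpos := Real.pi_pos
  calc θ/Real.pi = 2/Real.pi * (θ/2) := by field_simp
    _ ≤ Real.sin (θ/2) := h

lemma sqrt_c_eq {θ : ℝ} (h0 : 0 < θ) (hπ : θ ≤ Real.pi) :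
    Real.sqrt ((2 - Real.cos θ)^2 - 1)
      = 2 * Real.sin (θ/2) * Real.sqrt (1 + Real.sin (θ/2)^2) := by
  have hs := sin_half_pos h0 hπ
  have hid : (2 - Real.cos θ)^2 - 1 = (2*Real.sin (θ/2))^2 * (1 + Real.sin (θ/2)^2) := by
    rw [cos_eq_sin_half θ]; ring
  rw [hid, Real.sqrt_mul (by positivity), Real.sqrt_sq (by positivity)]

lemma f_near_inv {θ : ℝ} (h0 : 0 < θ) (hπ : θ ≤ Real.pi) :
    |1/Real.sqrt ((2 - Real.cos θ)^2 - 1) - 1/θ| ≤ 3 := by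
  have hπpos := Real.pi_pos
  have hπ4 := Real.pi_le_four
  set s := Real.sin (θ/2) with hsdef
  have hs : 0 < s := sin_half_pos h0 hπ
  have hs1 : s ≤ 1 := Real.sin_le_one _
  have h2s : 2*s ≤ θ := by
    have := Real.sin_le (by linarith : (0:ℝ) ≤ θ/2)
    rw [← hsdef] at this
    linarith
  have hJ : θ/Real.pi ≤ s := jordan_half h0.le hπ
  set r := Real.sqrt (1 + s^2) with hrdef
  have hr1 : 1 ≤ r := by
    nlinarith [Real.sq_sqrt (show (0:ℝ) ≤ 1+s^2 by positivity), Real.sqrt_nonneg (1+s^2), hs]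
  have hr2 : r ≤ 1 + s^2/2 := by
    rw [hrdef, show 1 + s^2/2 = Real.sqrt ((1+s^2/2)^2) from (Real.sqrt_sq (by positivity)).symm]
    exact Real.sqrt_le_sqrt (by nlinarith)
  have hrpos : 0 < r := lt_of_lt_of_le one_pos hr1
  rw [sqrt_c_eq h0 hπ, ← hsdef, ← hrdef]
  have step1 : |1/(2*s*r) - 1/(2*s)| ≤ 1/4 := by
    have heq : 1/(2*s) - 1/(2*s*r) = (r-1)/(2*s*r) := by field_simp
    have hb : (r-1)/(2*s*r) ≤ 1/4 := by
      rw [div_le_iff₀ (by positivity)]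
      nlinarith
    have hnn : 0 ≤ 1/(2*s) - 1/(2*s*r) := by
      rw [heq]; exact div_nonneg (by linarith) (by positivity)
    rw [abs_sub_comm, abs_of_nonneg hnn]
    linarith [heq ▸ hb]
  have step2 : |1/(2*s) - 1/θ| ≤ 11/4 := by
    have hnn : 0 ≤ 1/(2*s) - 1/θ := by
      rw [sub_nonneg]
      exact one_div_le_one_div_of_le (by positivity) h2s
    rw [abs_of_nonneg hnn]
    have heq : 1/(2*s) - 1/θ = (θ - 2*s)/(2*s*θ) := by field_simp
    rw [heq]
    rcases le_or_gt θ 1 with hθ1 | hθ1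
    · have hcube := Real.sin_gt_sub_cube (by linarith : (0:ℝ) < θ/2)
      rw [← hsdef] at hcube
      have hnum : θ - 2*s ≤ θ^3/16 := by nlinarith
      have hden : θ^2/2 ≤ 2*s*θ := by nlinarith
      rw [div_le_iff₀ (by positivity)]
      nlinarith
    · have hslb : θ ≤ Real.pi * s := by
        rw [div_le_iff₀ hπpos] at hJ
        linarith
      rw [div_le_iff₀ (by positivity)]
      nlinarith
  calc |1/(2*s*r) - 1/θ| ≤ |1/(2*s*r) - 1/(2*s)| + |1/(2*s) - 1/θ| := abs_sub_le _ _ _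
    _ ≤ 1/4 + 11/4 := add_le_add step1 step2
    _ = 3 := by norm_num

lemma sqrt_tendsto_atTop : Tendsto Real.sqrt atTop atTop := by
  refine tendsto_atTop_atTop.2 (fun b => ⟨max (b^2) 0, fun a ha => ?_⟩)
  have h2 : b^2 ≤ a := le_trans (le_max_left _ _) ha
  calc b ≤ |b| := le_abs_self b
    _ = Real.sqrt (b^2) := (Real.sqrt_sq_eq_abs b).symm
    _ ≤ Real.sqrt a := Real.sqrt_le_sqrt h2

lemma harm_bounds : ∀ N : ℕ, 1 ≤ N →
    (1/2) * Real.log (2*(N:ℝ)+1) ≤ (∑ n ∈ Finset.Icc 1 N, (1:ℝ)/(2*(n:ℝ)-1)) ∧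
    (∑ n ∈ Finset.Icc 1 N, (1:ℝ)/(2*(n:ℝ)-1)) ≤ 1 + (1/2) * Real.log (2*(N:ℝ)-1) := by
  intro N hN
  induction N, hN using Nat.le_induction with
  | base =>
      rw [Finset.Icc_self, Finset.sum_singleton]
      norm_num
      have h := Real.log_le_sub_one_of_pos (show (0:ℝ) < 3 by norm_num)
      linarith
  | succ n hn ih =>
      obtain ⟨ih1, ih2⟩ := ih
      rw [Finset.sum_Icc_succ_top (by omega : 1 ≤ n + 1)]
      have hn1 : (1:ℝ) ≤ (n:ℝ) := by exact_mod_cast hn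
      have hp1 : (0:ℝ) < 2*(n:ℝ)+1 := by linarith
      have hp3 : (0:ℝ) < 2*(n:ℝ)+3 := by linarith
      have hpm : (0:ℝ) < 2*(n:ℝ)-1 := by linarith
      push_cast
      constructor
      · have h := Real.log_le_sub_one_of_pos (show (0:ℝ) < (2*(n:ℝ)+3)/(2*(n:ℝ)+1) by positivity)
        rw [Real.log_div (by linarith) (by linarith)] at h
        have he : (2*(n:ℝ)+3)/(2*(n:ℝ)+1) - 1 = 2/(2*(n:ℝ)+1) := by field_simp; ring
        rw [he] at h
        have h2 : (2:ℝ)/(2*(n:ℝ)+1) ≤ 2 * (1/(2*((n:ℝ)+1)-1)) := by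
          rw [div_le_iff₀ hp1]
          have : 2*((n:ℝ)+1)-1 = 2*(n:ℝ)+1 := by ring
          rw [this]
          field_simp; exact le_rfl
        have h3 : (1/2) * Real.log (2*((n:ℝ)+1)+1) ≤ (1/2) * Real.log (2*(n:ℝ)+1) + 1/(2*((n:ℝ)+1)-1) := by
          have : 2*((n:ℝ)+1)+1 = 2*(n:ℝ)+3 := by ring
          rw [this]
          linarith
        linarith
      · have h := Real.log_le_sub_one_of_pos (show (0:ℝ) < (2*(n:ℝ)-1)/(2*(n:ℝ)+1) by positivity)
        rw [Real.log_div (by linarith) (by linarith)] at h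
        have he : (2*(n:ℝ)-1)/(2*(n:ℝ)+1) - 1 = -(2/(2*(n:ℝ)+1)) := by field_simp; ring
        rw [he] at h
        have h5 : (2:ℝ)/(2*(n:ℝ)+1) = 2 * (1/(2*(n:ℝ)+1)) := by ring
        have h6 : 2*((n:ℝ)+1)-1 = 2*(n:ℝ)+1 := by ring
        rw [h6]
        linarith

noncomputable def SS (N : ℕ) : ℝ :=
  ∑ n ∈ Finset.Icc 1 N, 1/Real.sqrt ((2 - Real.cos (Real.pi * (2*(n:ℝ)-1)/(2*(N:ℝ))))^2 - 1)

lemma theta_mem {N n : ℕ} (hn : n ∈ Finset.Icc 1 N) :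
    Real.pi * (2*(n:ℝ)-1)/(2*(N:ℝ)) ∈ Set.Ioc 0 Real.pi := by
  obtain ⟨hn1, hn2⟩ := Finset.mem_Icc.1 hn
  have hπ := Real.pi_pos
  have hcn : (1:ℝ) ≤ (n:ℝ) := by exact_mod_cast hn1
  have hcnN : (n:ℝ) ≤ (N:ℝ) := by exact_mod_cast hn2
  have hN0 : (0:ℝ) < (N:ℝ) := by linarith
  constructor
  · exact div_pos (mul_pos hπ (by linarith)) (by linarith)
  · rw [div_le_iff₀ (by linarith)]
    nlinarith

lemma theta_lb {N n : ℕ} (hn : n ∈ Finset.Icc 1 N) :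
    Real.pi/(2*(N:ℝ)) ≤ Real.pi * (2*(n:ℝ)-1)/(2*(N:ℝ)) := by
  obtain ⟨hn1, hn2⟩ := Finset.mem_Icc.1 hn
  have hπ := Real.pi_pos
  have hcn : (1:ℝ) ≤ (n:ℝ) := by exact_mod_cast hn1
  have hcnN : (n:ℝ) ≤ (N:ℝ) := by exact_mod_cast hn2
  have hN0 : (0:ℝ) < (N:ℝ) := by linarith
  apply div_le_div_of_nonneg_right ?_ (by linarith)
  nlinarith

lemma S_bounds {N : ℕ} (hN : 1 ≤ N) :
    ((N:ℝ) * Real.log N)/Real.pi - 3*N ≤ SS N ∧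
      SS N ≤ ((N:ℝ) * Real.log N)/Real.pi + 5*N := by
  have hπ := Real.pi_pos
  have hπ3 := Real.pi_gt_three
  have hN1 : (1:ℝ) ≤ (N:ℝ) := by exact_mod_cast hN
  have hN0 : (0:ℝ) < (N:ℝ) := by linarith
  have hlogN : 0 ≤ Real.log N := Real.log_nonneg hN1
  obtain ⟨hH1, hH2⟩ := harm_bounds N hN
  have hcard : (Finset.Icc 1 N).card = N := by rw [Nat.card_Icc]; omega
  have hsum : (∑ n ∈ Finset.Icc 1 N, 1/(Real.pi * (2*(n:ℝ)-1)/(2*(N:ℝ))))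
      = (2*(N:ℝ)/Real.pi) * ∑ n ∈ Finset.Icc 1 N, (1:ℝ)/(2*(n:ℝ)-1) := by
    rw [Finset.mul_sum]
    refine Finset.sum_congr rfl (fun n hn => ?_)
    obtain ⟨hn1, hn2⟩ := Finset.mem_Icc.1 hn
    have h1 : (1:ℝ) ≤ (n:ℝ) := by exact_mod_cast hn1
    have hne : (2*(n:ℝ)-1) ≠ 0 := ne_of_gt (by linarith)
    field_simp
  have hub : SS N ≤ (∑ n ∈ Finset.Icc 1 N, 1/(Real.pi * (2*(n:ℝ)-1)/(2*(N:ℝ)))) + 3*N := by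
    have h : SS N ≤ ∑ n ∈ Finset.Icc 1 N, (1/(Real.pi * (2*(n:ℝ)-1)/(2*(N:ℝ))) + 3) := by
      unfold SS
      refine Finset.sum_le_sum (fun n hn => ?_)
      obtain ⟨hθ1, hθ2⟩ := theta_mem hn
      have h2 := (abs_le.1 (f_near_inv hθ1 hθ2)).2
      linarith
    rw [Finset.sum_add_distrib, Finset.sum_const, hcard, nsmul_eq_mul] at h
    push_cast at h ⊢
    linarith
  have hlb : (∑ n ∈ Finset.Icc 1 N, 1/(Real.pi * (2*(n:ℝ)-1)/(2*(N:ℝ)))) - 3*N ≤ SS N := by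
    have h : (∑ n ∈ Finset.Icc 1 N, (1/(Real.pi * (2*(n:ℝ)-1)/(2*(N:ℝ))) - 3)) ≤ SS N := by
      unfold SS
      refine Finset.sum_le_sum (fun n hn => ?_)
      obtain ⟨hθ1, hθ2⟩ := theta_mem hn
      have h2 := (abs_le.1 (f_near_inv hθ1 hθ2)).1
      linarith
    rw [Finset.sum_sub_distrib, Finset.sum_const, hcard, nsmul_eq_mul] at h
    push_cast at h ⊢
    linarith
  set H := ∑ n ∈ Finset.Icc 1 N, (1:ℝ)/(2*(n:ℝ)-1) with hHdef
  have hcoef : (0:ℝ) ≤ 2*(N:ℝ)/Real.pi := by positivity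
  constructor
  · have h1 : Real.log (N:ℝ) ≤ Real.log (2*(N:ℝ)+1) :=
      Real.log_le_log hN0 (by linarith)
    have h2 : (2*(N:ℝ)/Real.pi) * ((1/2) * Real.log (2*(N:ℝ)+1)) ≤ (2*(N:ℝ)/Real.pi) * H :=
      mul_le_mul_of_nonneg_left hH1 hcoef
    have h3 : ((N:ℝ) * Real.log N)/Real.pi ≤ (2*(N:ℝ)/Real.pi) * ((1/2) * Real.log (2*(N:ℝ)+1)) := by
      have : (2*(N:ℝ)/Real.pi) * ((1/2) * Real.log (2*(N:ℝ)+1)) = ((N:ℝ) * Real.log (2*(N:ℝ)+1))/Real.pi := by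
        ring
      rw [this]
      apply div_le_div_of_nonneg_right ?_ hπ.le
      · exact mul_le_mul_of_nonneg_left h1 (by linarith)
    rw [hsum] at hlb
    linarith
  · have hA : Real.log (2*(N:ℝ)-1) ≤ Real.log 3 + Real.log N := by
      rw [← Real.log_mul (by norm_num) (ne_of_gt hN0)]
      exact Real.log_le_log (by linarith) (by linarith)
    have hlog3 : Real.log 3 ≤ 2 := by
      have := Real.log_le_sub_one_of_pos (show (0:ℝ) < 3 by norm_num)
      linarith
    have h2 : (2*(N:ℝ)/Real.pi) * H ≤ (2*(N:ℝ)/Real.pi) * (1 + (1/2) * (2 + Real.log N)) := by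
      apply mul_le_mul_of_nonneg_left ?_ hcoef
      linarith
    have h3 : (2*(N:ℝ)/Real.pi) * (1 + (1/2) * (2 + Real.log N))
        = ((N:ℝ) * Real.log N)/Real.pi + 4*(N:ℝ)/Real.pi := by ring
    have h4 : 4*(N:ℝ)/Real.pi ≤ 2*(N:ℝ) := by
      rw [div_le_iff₀ hπ]
      nlinarith
    rw [hsum] at hub
    linarith

lemma S_div_lim : Tendsto (fun N : ℕ => SS N / ((N:ℝ) * Real.log N)) atTop (𝓝 (1/Real.pi)) := by
  have hπ := Real.pi_pos
  have hlogto : Tendsto (fun N : ℕ => Real.log N) atTop atTop :=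
    Real.tendsto_log_atTop.comp tendsto_natCast_atTop_atTop
  have hinv : Tendsto (fun N : ℕ => 1/Real.log N) atTop (𝓝 0) :=
    tendsto_const_nhds.div_atTop hlogto
  have hc : Tendsto (fun _ : ℕ => 1/Real.pi) atTop (𝓝 (1/Real.pi)) := tendsto_const_nhds
  have hlo : Tendsto (fun N : ℕ => 1/Real.pi - 3*(1/Real.log N)) atTop (𝓝 (1/Real.pi)) := by
    simpa using hc.sub (hinv.const_mul 3)
  have hup : Tendsto (fun N : ℕ => 1/Real.pi + 5*(1/Real.log N)) atTop (𝓝 (1/Real.pi)) := by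
    simpa using hc.add (hinv.const_mul 5)
  apply tendsto_of_tendsto_of_tendsto_of_le_of_le' hlo hup
  · filter_upwards [hlogto.eventually_gt_atTop 0, eventually_ge_atTop 1] with N hlog hN1
    have hb := (S_bounds hN1).1
    have hN0 : (0:ℝ) < (N:ℝ) := by exact_mod_cast lt_of_lt_of_le one_pos hN1
    have hNL : (0:ℝ) < (N:ℝ)*Real.log N := by positivity
    rw [le_div_iff₀ hNL]
    calc (1/Real.pi - 3*(1/Real.log N))*((N:ℝ)*Real.log N)
        = ((N:ℝ) * Real.log N)/Real.pi - 3*(N:ℝ) := by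
          field_simp
      _ ≤ SS N := hb
  · filter_upwards [hlogto.eventually_gt_atTop 0, eventually_ge_atTop 1] with N hlog hN1
    have hb := (S_bounds hN1).2
    have hN0 : (0:ℝ) < (N:ℝ) := by exact_mod_cast lt_of_lt_of_le one_pos hN1
    have hNL : (0:ℝ) < (N:ℝ)*Real.log N := by positivity
    rw [div_le_iff₀ hNL]
    calc SS N ≤ ((N:ℝ) * Real.log N)/Real.pi + 5*(N:ℝ) := hb
      _ = (1/Real.pi + 5*(1/Real.log N))*((N:ℝ)*Real.log N) := by
          field_simp

noncomputable def dd (M : ℕ → ℝ) (t : ℝ) (N : ℕ) : ℝ :=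
  t / Real.sqrt (4 * M N * N * Real.log N)

noncomputable def ee (M : ℕ → ℝ) (t : ℝ) (N : ℕ) : ℝ :=
  coth (2 * (betac - dd M t N)) * Real.cosh (2 * (betac - dd M t N)) - 2

lemma cosh2_slope : Tendsto (fun d : ℝ => (Real.cosh (2*d) - 1)/d) (𝓝[≠] (0:ℝ)) (𝓝 0) := by
  have h1 : HasDerivAt (fun d : ℝ => 2*d) 2 0 := by
    simpa using (hasDerivAt_id (0:ℝ)).const_mul 2
  have h2 : HasDerivAt (fun d : ℝ => Real.cosh (2*d)) 0 0 := by
    have h := (Real.hasDerivAt_cosh (2*0)).comp 0 h1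
    simpa [Function.comp_def] using h
  have h3 := hasDerivAt_iff_tendsto_slope.1 h2
  refine Tendsto.congr (fun d => ?_) h3
  rw [slope_def_field]
  norm_num

lemma sinh2_slope : Tendsto (fun d : ℝ => Real.sinh (2*d)/d) (𝓝[≠] (0:ℝ)) (𝓝 2) := by
  have h1 : HasDerivAt (fun d : ℝ => 2*d) 2 0 := by
    simpa using (hasDerivAt_id (0:ℝ)).const_mul 2
  have h2 : HasDerivAt (fun d : ℝ => Real.sinh (2*d)) 2 0 := by
    have h := (Real.hasDerivAt_sinh (2*0)).comp 0 h1
    simpa [Function.comp_def] using h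
  have h3 := hasDerivAt_iff_tendsto_slope.1 h2
  refine Tendsto.congr (fun d => ?_) h3
  rw [slope_def_field]
  norm_num

set_option maxHeartbeats 2000000 in
lemma sandwich (M : ℕ → ℝ) (t : ℝ) (γ : ℝ → ℝ → ℝ)
    (hγ : ∀ β > (0 : ℝ), ∀ θ ∈ Set.Ioc 0 Real.pi,
      0 ≤ γ β θ ∧ Real.cosh (γ β θ) = coth (2 * β) * Real.cosh (2 * β) - Real.cos θ)
    (N : ℕ) (hN : 1 ≤ N) (hMp : 0 < M N)
    (hβ : 0 < betac - dd M t N) (he : 0 < ee M t N) (he1 : ee M t N ≤ 1) :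
    (2 * M N * (ee M t N * SS N)) / Real.sqrt (1 + 7 * ee M t N * (N:ℝ)^2)
      ≤ (2 * M N * (∑ n ∈ Finset.Icc 1 N,
            γ (betac - dd M t N) (Real.pi * (2 * (n : ℝ) - 1) / (2 * N)))
          - 2 * M N * (∑ n ∈ Finset.Icc 1 N,
            γ betac (Real.pi * (2 * (n : ℝ) - 1) / (2 * N)))) ∧
    (2 * M N * (∑ n ∈ Finset.Icc 1 N,
            γ (betac - dd M t N) (Real.pi * (2 * (n : ℝ) - 1) / (2 * N)))
          - 2 * M N * (∑ n ∈ Finset.Icc 1 N,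
            γ betac (Real.pi * (2 * (n : ℝ) - 1) / (2 * N))))
      ≤ 2 * M N * (ee M t N * SS N) := by
  have hπ := Real.pi_pos
  set e := ee M t N with hedef
  set η := 7 * e * (N:ℝ)^2 with hηdef
  have hN1 : (1:ℝ) ≤ (N:ℝ) := by exact_mod_cast hN
  have hηnn : 0 ≤ η := by rw [hηdef]; positivity
  have hsqη1 : 1 ≤ Real.sqrt (1 + η) := by
    nlinarith [Real.sq_sqrt (show (0:ℝ) ≤ 1 + η by linarith), Real.sqrt_nonneg (1+η)]
  have hsqηpos : 0 < Real.sqrt (1 + η) := lt_of_lt_of_le one_pos hsqη1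
  -- per-term bounds
  have hterm : ∀ n ∈ Finset.Icc 1 N,
      (e / Real.sqrt (1+η)) * (1 / Real.sqrt ((2 - Real.cos (Real.pi * (2*(n:ℝ)-1)/(2*(N:ℝ))))^2 - 1))
        ≤ γ (betac - dd M t N) (Real.pi * (2*(n:ℝ)-1)/(2*(N:ℝ)))
          - γ betac (Real.pi * (2*(n:ℝ)-1)/(2*(N:ℝ))) ∧
      γ (betac - dd M t N) (Real.pi * (2*(n:ℝ)-1)/(2*(N:ℝ)))
          - γ betac (Real.pi * (2*(n:ℝ)-1)/(2*(N:ℝ)))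
        ≤ e * (1 / Real.sqrt ((2 - Real.cos (Real.pi * (2*(n:ℝ)-1)/(2*(N:ℝ))))^2 - 1)) := by
    intro n hn
    set θ := Real.pi * (2*(n:ℝ)-1)/(2*(N:ℝ)) with hθdef
    have hθm := theta_mem hn
    obtain ⟨hθ0, hθπ⟩ := hθm
    obtain ⟨hg2nn, hg2⟩ := hγ betac betac_pos θ ⟨hθ0, hθπ⟩
    obtain ⟨hg1nn, hg1⟩ := hγ (betac - dd M t N) hβ θ ⟨hθ0, hθπ⟩
    set s := Real.sin (θ/2) with hsdef
    have hs : 0 < s := sin_half_pos hθ0 hθπ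
    have hs1 : s ≤ 1 := Real.sin_le_one _
    have hcos : Real.cos θ = 1 - 2*s^2 := cos_eq_sin_half θ
    set c := 2 - Real.cos θ with hcdef
    have hc1 : 1 < c := by rw [hcdef, hcos]; nlinarith
    have hc3 : c ≤ 3 := by
      rw [hcdef]
      have := Real.neg_one_le_cos θ
      linarith
    have hg2' : Real.cosh (γ betac θ) = c := by
      rw [hg2, coth_cosh_betac, hcdef]
    have hg1' : Real.cosh (γ (betac - dd M t N) θ) = c + e := by
      rw [hg1, hedef]
      unfold ee
      ring
    obtain ⟨hL, hR⟩ := gamma_diff_bounds hc1 he hg2nn hg1nn hg2' hg1'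
    have hid : c^2 - 1 = 4*s^2 + 4*s^4 := by rw [hcdef, hcos]; ring
    have hcm1pos : 0 < c^2 - 1 := by nlinarith
    -- N^2 * (c^2-1) ≥ 1
    have hJ : θ/Real.pi ≤ s := jordan_half hθ0.le hθπ
    have hθlb : Real.pi/(2*(N:ℝ)) ≤ θ := theta_lb hn
    have hNs : 1 ≤ 2*(N:ℝ)*s := by
      have h1 : θ ≤ s * Real.pi := by
        rw [div_le_iff₀ hπ] at hJ; exact hJ
      have h2 : Real.pi ≤ θ * (2*(N:ℝ)) := by
        rw [div_le_iff₀ (by linarith : (0:ℝ) < 2*(N:ℝ))] at hθlb; exact hθlb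
      nlinarith
    have hN2c : 1 ≤ (N:ℝ)^2 * (c^2 - 1) := by
      have h4 : 1 ≤ (2*(N:ℝ)*s)^2 := by nlinarith
      nlinarith [sq_nonneg ((N:ℝ)*s^2), sq_nonneg s]
    -- (c+e)^2 - 1 ≤ (1+η)(c^2-1)
    have hkey : (c+e)^2 - 1 ≤ (1+η)*(c^2-1) := by
      have h5 : e*(2*c+e) ≤ 7*e := by nlinarith
      have h6 : 7*e ≤ η*(c^2-1) := by
        rw [hηdef]
        have := mul_nonneg (by linarith : (0:ℝ) ≤ 7*e) (by linarith : (0:ℝ) ≤ (N:ℝ)^2*(c^2-1) - 1)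
        nlinarith
      nlinarith
    have hcepos : 0 < (c+e)^2 - 1 := by nlinarith
    have hsqle : Real.sqrt ((c+e)^2-1) ≤ Real.sqrt (1+η) * Real.sqrt (c^2-1) := by
      rw [← Real.sqrt_mul (by linarith : (0:ℝ) ≤ 1+η)]
      exact Real.sqrt_le_sqrt hkey
    have hsqcpos : 0 < Real.sqrt (c^2-1) := Real.sqrt_pos.2 hcm1pos
    have hsqcepos : 0 < Real.sqrt ((c+e)^2-1) := Real.sqrt_pos.2 hcepos
    constructor
    · have h7 : e / (Real.sqrt (1+η) * Real.sqrt (c^2-1)) ≤ e / Real.sqrt ((c+e)^2-1) :=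
        div_le_div_of_nonneg_left he.le hsqcepos hsqle
      have h8 : (e / Real.sqrt (1+η)) * (1 / Real.sqrt (c^2-1))
          = e / (Real.sqrt (1+η) * Real.sqrt (c^2-1)) := by
        field_simp
      rw [h8]
      exact le_trans h7 hL
    · have h9 : e / Real.sqrt (c^2-1) = e * (1 / Real.sqrt (c^2-1)) := by ring
      rw [← h9]
      exact hR
  -- sum the bounds
  have hsum_lower : (e / Real.sqrt (1+η)) * SS N
      ≤ (∑ n ∈ Finset.Icc 1 N, γ (betac - dd M t N) (Real.pi * (2*(n:ℝ)-1)/(2*(N:ℝ))))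
        - (∑ n ∈ Finset.Icc 1 N, γ betac (Real.pi * (2*(n:ℝ)-1)/(2*(N:ℝ)))) := by
    rw [← Finset.sum_sub_distrib]
    unfold SS
    rw [Finset.mul_sum]
    exact Finset.sum_le_sum (fun n hn => (hterm n hn).1)
  have hsum_upper : (∑ n ∈ Finset.Icc 1 N, γ (betac - dd M t N) (Real.pi * (2*(n:ℝ)-1)/(2*(N:ℝ))))
        - (∑ n ∈ Finset.Icc 1 N, γ betac (Real.pi * (2*(n:ℝ)-1)/(2*(N:ℝ))))
      ≤ e * SS N := by
    rw [← Finset.sum_sub_distrib]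
    unfold SS
    rw [Finset.mul_sum]
    exact Finset.sum_le_sum (fun n hn => (hterm n hn).2)
  have h2M : (0:ℝ) ≤ 2 * M N := by linarith
  constructor
  · have h := mul_le_mul_of_nonneg_left hsum_lower h2M
    calc (2 * M N * (e * SS N)) / Real.sqrt (1 + η)
        = 2 * M N * ((e / Real.sqrt (1+η)) * SS N) := by
          field_simp
      _ ≤ 2 * M N * ((∑ n ∈ Finset.Icc 1 N, γ (betac - dd M t N) (Real.pi * (2*(n:ℝ)-1)/(2*(N:ℝ))))
            - (∑ n ∈ Finset.Icc 1 N, γ betac (Real.pi * (2*(n:ℝ)-1)/(2*(N:ℝ))))) := h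
      _ = 2 * M N * (∑ n ∈ Finset.Icc 1 N, γ (betac - dd M t N) (Real.pi * (2*(n:ℝ)-1)/(2*(N:ℝ))))
            - 2 * M N * (∑ n ∈ Finset.Icc 1 N, γ betac (Real.pi * (2*(n:ℝ)-1)/(2*(N:ℝ)))) := by
          ring
  · have h := mul_le_mul_of_nonneg_left hsum_upper h2M
    calc 2 * M N * (∑ n ∈ Finset.Icc 1 N, γ (betac - dd M t N) (Real.pi * (2*(n:ℝ)-1)/(2*(N:ℝ))))
            - 2 * M N * (∑ n ∈ Finset.Icc 1 N, γ betac (Real.pi * (2*(n:ℝ)-1)/(2*(N:ℝ))))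
        = 2 * M N * ((∑ n ∈ Finset.Icc 1 N, γ (betac - dd M t N) (Real.pi * (2*(n:ℝ)-1)/(2*(N:ℝ))))
            - (∑ n ∈ Finset.Icc 1 N, γ betac (Real.pi * (2*(n:ℝ)-1)/(2*(N:ℝ))))) := by ring
      _ ≤ 2 * M N * (e * SS N) := h

set_option maxHeartbeats 1000000 in
/-- Suppose `M : ℕ → (0,∞)` satisfies `N(ln ln N)²/(M(N)·ln N) → 0`, and let
`L3(β) = 2M(N) ∑_{n=1}^{N} γ_{θ_n}(β)` where `θ_n = π(2n−1)/(2N)` and `γ_θ(β)` is the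
unique `γ ≥ 0` with `cosh γ = coth(2β)cosh(2β) − cos θ`. Then for each fixed `t ≥ 0`,
`L3(β_c − t/√(4M(N)N ln N)) − L3(β_c) → 4t²/π` as `N → ∞`. -/
theorem stmt16 (M : ℕ → ℝ) (hMpos : ∀ N, 0 < M N)
    (hM : Tendsto (fun N : ℕ =>
        (N : ℝ) * (Real.log (Real.log N)) ^ 2 / (M N * Real.log N)) atTop (nhds 0))
    (γ : ℝ → ℝ → ℝ)
    (hγ : ∀ β > (0 : ℝ), ∀ θ ∈ Set.Ioc 0 Real.pi,
      0 ≤ γ β θ ∧ Real.cosh (γ β θ) = coth (2 * β) * Real.cosh (2 * β) - Real.cos θ)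
    (t : ℝ) (ht : 0 ≤ t) :
    Tendsto (fun N : ℕ =>
        2 * M N * (∑ n ∈ Finset.Icc 1 N,
            γ (betac - t / Real.sqrt (4 * M N * N * Real.log N))
              (Real.pi * (2 * (n : ℝ) - 1) / (2 * N)))
          - 2 * M N * (∑ n ∈ Finset.Icc 1 N,
            γ betac (Real.pi * (2 * (n : ℝ) - 1) / (2 * N))))
      atTop (nhds (4 * t ^ 2 / Real.pi)) := by
  rcases eq_or_lt_of_le ht with ht0 | htpos
  · have h0 : ∀ N : ℕ, 2 * M N * (∑ n ∈ Finset.Icc 1 N,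
            γ (betac - t / Real.sqrt (4 * M N * N * Real.log N))
              (Real.pi * (2 * (n : ℝ) - 1) / (2 * N)))
          - 2 * M N * (∑ n ∈ Finset.Icc 1 N,
            γ betac (Real.pi * (2 * (n : ℝ) - 1) / (2 * N))) = 0 := by
      intro N
      rw [← ht0, zero_div, sub_zero, sub_self]
    have h4 : 4 * t ^ 2 / Real.pi = 0 := by rw [← ht0]; norm_num
    rw [h4]
    exact Tendsto.congr (fun N => (h0 N).symm) tendsto_const_nhds
  · show Tendsto (fun N : ℕ =>
        2 * M N * (∑ n ∈ Finset.Icc 1 N,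
            γ (betac - dd M t N) (Real.pi * (2 * (n : ℝ) - 1) / (2 * N)))
          - 2 * M N * (∑ n ∈ Finset.Icc 1 N,
            γ betac (Real.pi * (2 * (n : ℝ) - 1) / (2 * N))))
      atTop (nhds (4 * t ^ 2 / Real.pi))
    have hπ := Real.pi_pos
    have htne : t ≠ 0 := ne_of_gt htpos
    have hNcast : Tendsto (fun N : ℕ => (N:ℝ)) atTop atTop := tendsto_natCast_atTop_atTop
    have hlogto : Tendsto (fun N : ℕ => Real.log N) atTop atTop :=
      Real.tendsto_log_atTop.comp hNcast
    have hloglog : Tendsto (fun N : ℕ => Real.log (Real.log N)) atTop atTop :=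
      Real.tendsto_log_atTop.comp hlogto
    have hlogpos : ∀ᶠ N : ℕ in atTop, 0 < Real.log N := hlogto.eventually_gt_atTop 0
    have hNpos : ∀ᶠ N : ℕ in atTop, (1:ℝ) ≤ (N:ℝ) := hNcast.eventually_ge_atTop 1
    have h_b : Tendsto (fun N : ℕ => (N:ℝ)/(M N * Real.log N)) atTop (𝓝 0) := by
      apply tendsto_of_tendsto_of_tendsto_of_le_of_le' tendsto_const_nhds hM
      · filter_upwards [hlogpos, hNpos] with N h1 h2
        have := hMpos N
        positivity
      · filter_upwards [hlogpos, hNpos, hloglog.eventually_ge_atTop 1] with N h1 h2 h3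
        have hM0 := hMpos N
        have hb0 : 0 ≤ (N:ℝ)/(M N * Real.log N) := by positivity
        have heq : (N:ℝ) * (Real.log (Real.log N))^2 / (M N * Real.log N)
            = ((N:ℝ)/(M N * Real.log N)) * (Real.log (Real.log N))^2 := by ring
        rw [heq]
        nlinarith [mul_nonneg hb0 (by nlinarith : (0:ℝ) ≤ Real.log (Real.log (N:ℝ))^2 - 1)]
    have h_Mb : ∀ᶠ N : ℕ in atTop, (N:ℝ) ≤ M N * Real.log N := by
      filter_upwards [h_b.eventually (gt_mem_nhds one_pos), hlogpos] with N h1 h2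
      have hM0 := hMpos N
      have hden : (0:ℝ) < M N * Real.log N := by positivity
      rw [div_lt_one hden] at h1
      linarith
    have h_argN : ∀ᶠ N : ℕ in atTop, (N:ℝ) ≤ 4 * M N * N * Real.log N := by
      filter_upwards [h_Mb, hNpos] with N h1 h2
      have h3 : (N:ℝ) ≤ 4*(N:ℝ)*(N:ℝ) := by nlinarith
      have h4 : 4*(N:ℝ)*(N:ℝ) ≤ 4*(N:ℝ)*(M N*Real.log N) :=
        mul_le_mul_of_nonneg_left h1 (by linarith)
      have h5 : 4 * M N * (N:ℝ) * Real.log N = 4*(N:ℝ)*(M N*Real.log N) := by ring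
      linarith
    have h_argto : Tendsto (fun N : ℕ => 4 * M N * N * Real.log N) atTop atTop :=
      tendsto_atTop_mono' atTop h_argN hNcast
    have h_sq : Tendsto (fun N : ℕ => Real.sqrt (4 * M N * N * Real.log N)) atTop atTop :=
      sqrt_tendsto_atTop.comp h_argto
    have hδ0 : Tendsto (dd M t) atTop (𝓝 0) := tendsto_const_nhds.div_atTop h_sq
    have h_argpos : ∀ᶠ N : ℕ in atTop, 0 < 4 * M N * N * Real.log N := by
      filter_upwards [hlogpos, hNpos] with N h1 h2
      have := hMpos N
      positivity
    have hδpos : ∀ᶠ N : ℕ in atTop, 0 < dd M t N := by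
      filter_upwards [h_argpos] with N h1
      exact div_pos htpos (Real.sqrt_pos.2 h1)
    have hβpos : ∀ᶠ N : ℕ in atTop, 0 < betac - dd M t N := by
      filter_upwards [hδ0.eventually (gt_mem_nhds betac_pos)] with N h
      linarith
    have h_ueq : ∀ N, Real.sinh (2*(betac - dd M t N))
        = Real.cosh (2*dd M t N) - Real.sqrt 2 * Real.sinh (2*dd M t N) :=
      fun N => sinh_two_beta_sub (dd M t N)
    have h_u1 : Tendsto (fun N : ℕ =>
        Real.cosh (2*dd M t N) - Real.sqrt 2 * Real.sinh (2*dd M t N)) atTop (𝓝 1) := by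
      have hc : Continuous (fun d : ℝ => Real.cosh (2*d) - Real.sqrt 2 * Real.sinh (2*d)) := by
        continuity
      have h2 := (hc.tendsto 0).comp hδ0
      simp only [Function.comp_def] at h2
      simpa using h2
    have h_upos : ∀ᶠ N : ℕ in atTop,
        1/2 < Real.cosh (2*dd M t N) - Real.sqrt 2 * Real.sinh (2*dd M t N) :=
      h_u1.eventually (lt_mem_nhds (show (1:ℝ)/2 < 1 by norm_num))
    have h_ult1 : ∀ᶠ N : ℕ in atTop,
        Real.cosh (2*dd M t N) - Real.sqrt 2 * Real.sinh (2*dd M t N) < 1 := by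
      filter_upwards [hδpos] with N h
      exact u_lt_one h
    have h_eeq : ∀ᶠ N : ℕ in atTop, ee M t N
        = (Real.cosh (2*dd M t N) - Real.sqrt 2 * Real.sinh (2*dd M t N) - 1)^2
          / (Real.cosh (2*dd M t N) - Real.sqrt 2 * Real.sinh (2*dd M t N)) := by
      filter_upwards [h_upos] with N h1
      have hs : 0 < Real.sinh (2*(betac - dd M t N)) := by
        rw [h_ueq N]; linarith
      have h2 := coth_formula hs
      unfold ee
      rw [h2, h_ueq N]
    have h_epos : ∀ᶠ N : ℕ in atTop, 0 < ee M t N := by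
      filter_upwards [h_eeq, h_upos, h_ult1] with N h1 h2 h3
      rw [h1]
      apply div_pos ?_ (by linarith)
      have h4 : Real.cosh (2*dd M t N) - Real.sqrt 2*Real.sinh (2*dd M t N) - 1 < 0 := by linarith
      nlinarith
    have hδne : Tendsto (dd M t) atTop (𝓝[≠] (0:ℝ)) := by
      rw [tendsto_nhdsWithin_iff]
      exact ⟨hδ0, by filter_upwards [hδpos] with N h using ne_of_gt h⟩
    have hterm2 : Tendsto (fun N : ℕ =>
        (Real.cosh (2*dd M t N) - Real.sqrt 2*Real.sinh (2*dd M t N) - 1)/dd M t N)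
        atTop (𝓝 (0 - Real.sqrt 2 * 2)) := by
      have h1 := cosh2_slope.comp hδne
      have h2 := sinh2_slope.comp hδne
      have h3 := h1.sub (h2.const_mul (Real.sqrt 2))
      refine Tendsto.congr (fun N => ?_) h3
      simp only [Function.comp_apply]
      ring
    have hsq8 : Tendsto (fun N : ℕ =>
        ((Real.cosh (2*dd M t N) - Real.sqrt 2*Real.sinh (2*dd M t N) - 1)/dd M t N)^2)
        atTop (𝓝 8) := by
      have h := hterm2.pow 2
      have h8 : (0 - Real.sqrt 2*2)^2 = 8 := by
        rw [show (0 - Real.sqrt 2*2)^2 = Real.sqrt 2^2*4 by ring,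
          Real.sq_sqrt (by norm_num : (0:ℝ) ≤ 2)]
        norm_num
      rwa [h8] at h
    have hA : Tendsto (fun N : ℕ => ee M t N * (M N * N * Real.log N)) atTop (𝓝 (2*t^2)) := by
      have hlim : Tendsto (fun N : ℕ => (t^2/4) *
          (((Real.cosh (2*dd M t N) - Real.sqrt 2*Real.sinh (2*dd M t N) - 1)/dd M t N)^2
            / (Real.cosh (2*dd M t N) - Real.sqrt 2*Real.sinh (2*dd M t N))))
          atTop (𝓝 ((t^2/4) * (8/1))) :=
        (hsq8.div h_u1 one_ne_zero).const_mul _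
      have h8 : (t^2/4) * ((8:ℝ)/1) = 2*t^2 := by ring
      rw [h8] at hlim
      refine hlim.congr' ?_
      filter_upwards [h_argpos, h_upos, h_eeq, hδpos] with N h1 h2 h3 h4
      have hq : Real.sqrt (4*M N*N*Real.log N)^2 = 4*M N*N*Real.log N := Real.sq_sqrt h1.le
      have hdne : dd M t N ≠ 0 := ne_of_gt h4
      have hune : Real.cosh (2*dd M t N) - Real.sqrt 2*Real.sinh (2*dd M t N) ≠ 0 := by linarith
      have hd2 : dd M t N^2 * (4*M N*N*Real.log N) = t^2 := by
        unfold dd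
        rw [div_pow, hq]
        field_simp
        exact div_self (ne_of_gt (by linarith))
      have hMNL : M N * (N:ℝ) * Real.log N = (4*M N*N*Real.log N)/4 := by ring
      rw [h3, hMNL, ← hd2]
      field_simp
    have hB : Tendsto (fun N : ℕ => ee M t N * (N:ℝ)^2) atTop (𝓝 0) := by
      have h := hA.mul h_b
      rw [mul_zero] at h
      refine Tendsto.congr' ?_ h
      filter_upwards [hlogpos, hNpos] with N h1 h2
      have hM0 := hMpos N
      have hMne : M N ≠ 0 := ne_of_gt hM0
      have hLne : Real.log N ≠ 0 := ne_of_gt h1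
      field_simp
    have h_elt1 : ∀ᶠ N : ℕ in atTop, ee M t N ≤ 1 := by
      filter_upwards [hB.eventually (gt_mem_nhds one_pos), h_epos, hNpos] with N h1 h2 h3
      nlinarith
    have hη0 : Tendsto (fun N : ℕ => 1 + 7*ee M t N*(N:ℝ)^2) atTop (𝓝 1) := by
      have h : Tendsto (fun N : ℕ => 1 + 7*(ee M t N*(N:ℝ)^2)) atTop (𝓝 (1 + 7*0)) :=
        tendsto_const_nhds.add (hB.const_mul 7)
      norm_num at h
      exact Tendsto.congr (fun N => by ring) h
    have hsqeta : Tendsto (fun N : ℕ => Real.sqrt (1 + 7*ee M t N*(N:ℝ)^2)) atTop (𝓝 1) := by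
      have h := (Real.continuous_sqrt.tendsto 1).comp hη0
      rwa [Real.sqrt_one] at h
    have hU : Tendsto (fun N : ℕ => 2 * M N * (ee M t N * SS N)) atTop (𝓝 (4*t^2/Real.pi)) := by
      have h := (hA.mul S_div_lim).const_mul 2
      have hval : 2*(2*t^2*(1/Real.pi)) = 4*t^2/Real.pi := by ring
      rw [hval] at h
      refine h.congr' ?_
      filter_upwards [hlogpos, hNpos] with N h1 h2
      have hNne : (N:ℝ) ≠ 0 := by linarith
      have hLne : Real.log N ≠ 0 := ne_of_gt h1
      field_simp
    have hLow : Tendsto (fun N : ℕ =>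
        (2 * M N * (ee M t N * SS N))/Real.sqrt (1 + 7*ee M t N*(N:ℝ)^2))
        atTop (𝓝 (4*t^2/Real.pi)) := by
      have h := hU.div hsqeta one_ne_zero
      rwa [div_one] at h
    apply tendsto_of_tendsto_of_tendsto_of_le_of_le' hLow hU
    · filter_upwards [hβpos, h_epos, h_elt1, eventually_ge_atTop 1] with N h1 h2 h3 h4
      exact (sandwich M t γ hγ N h4 (hMpos N) h1 h2 h3).1
    · filter_upwards [hβpos, h_epos, h_elt1, eventually_ge_atTop 1] with N h1 h2 h3 h4
      exact (sandwich M t γ hγ N h4 (hMpos N) h1 h2 h3).2
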